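/- For positive integers h ≥ 2 and k ≥ h^{1/3} + 2, the quantity g(h^k, h)/C(h^k, h) satisfies g(h^k,h)/C(h^k,h) ≤ (h!/(h^h - h)) · (1 + 4/h^{h^{1/3}}), where C(m,h) is the binomial coefficient. -/

import Mathlib

/-- Product of the part sizes of an equitable partition of n into h parts. -/
def fpart (n h : ℕ) : ℕ := ((n + h - 1) / h) ^ (n % h) * (n / h) ^ (h - n % h)

/-- The recursive count g(n,h). -/
def gval (h n : ℕ) : ℕ :=
  if hc : 2 ≤ h ∧ h ≤ n then
    fpart n h + (n % h) * gval h ((n + h - 1) / h) + (h - n % h) * gval h (n / h)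
  else 0
termination_by n
decreasing_by
  · have h2 : 2 ≤ h := hc.1
    have hn : h ≤ n := hc.2
    have hm : n * 2 ≤ n * h := Nat.mul_le_mul (le_refl n) h2
    exact (Nat.div_lt_iff_lt_mul (by omega)).mpr (by omega)
  · exact Nat.div_lt_self (by omega) (by omega)

lemma gval_one (h : ℕ) (hh : 2 ≤ h) : gval h 1 = 0 := by
  rw [gval]; simp; omega

lemma gval_pow_succ (h k : ℕ) (hh : 2 ≤ h) :
    gval h (h ^ (k + 1)) = h ^ (k * h) + h * gval h (h ^ k) := by
  have hpos : 0 < h := by omega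
  have hle : h ≤ h ^ (k + 1) := Nat.le_self_pow (by omega) h
  have hmod : h ^ (k + 1) % h = 0 := by
    simp [pow_succ, Nat.mul_mod_left]
  have hdiv : h ^ (k + 1) / h = h ^ k := by
    rw [pow_succ, Nat.mul_div_cancel _ hpos]
  have hdiv2 : (h ^ (k + 1) + h - 1) / h = h ^ k := by
    have : h ^ (k + 1) + h - 1 = (h - 1) + h ^ k * h := by
      rw [pow_succ]; omega
    rw [this, Nat.add_mul_div_right _ _ hpos, Nat.div_eq_of_lt (by omega)]
    omega
  rw [gval]
  rw [dif_pos ⟨hh, hle⟩, hmod, hdiv, hdiv2]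
  simp [fpart, hmod, hdiv, hdiv2, pow_mul]

lemma gval_id (h : ℕ) (hh : 2 ≤ h) : ∀ k : ℕ,
    ((h : ℝ) ^ h - h) * gval h (h ^ (k + 1)) + (h : ℝ) ^ (k + 1) = (h : ℝ) ^ (h * (k + 1)) := by
  intro k
  induction k with
  | zero =>
      rw [gval_pow_succ h 0 hh]
      simp [gval_one h hh]
  | succ k ih =>
      rw [gval_pow_succ h (k + 1) hh]
      push_cast
      linear_combination (h : ℝ) * ih

/-- for h ≥ 2 and k ≥ h^{1/3} + 2,
g(h^k,h)/C(h^k,h) ≤ (h!/(h^h - h))·(1 + 4/h^{h^{1/3}}). -/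
theorem stmt17 (h k : ℕ) (hh : 2 ≤ h)
    (hk : (h : ℝ) ^ ((1 : ℝ) / 3) + 2 ≤ (k : ℝ)) :
    (gval h (h ^ k) : ℝ) / ((h ^ k).choose h : ℝ) ≤
      ((Nat.factorial h : ℝ) / ((h : ℝ) ^ h - h)) *
        (1 + 4 / (h : ℝ) ^ ((h : ℝ) ^ ((1 : ℝ) / 3))) := by
  have H1 : (1 : ℝ) ≤ (h : ℝ) := by exact_mod_cast (by omega : 1 ≤ h)
  have H2 : (2 : ℝ) ≤ (h : ℝ) := by exact_mod_cast hh
  have Hpos : (0 : ℝ) < (h : ℝ) := by linarith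
  -- exponent facts
  have hcube : (1 : ℝ) ≤ (h : ℝ) ^ ((1 : ℝ) / 3) :=
    Real.one_le_rpow H1 (by norm_num)
  have hk3 : 3 ≤ k := by
    have : (3 : ℝ) ≤ (k : ℝ) := by linarith
    exact_mod_cast this
  obtain ⟨k', rfl⟩ : ∃ k', k = k' + 1 := ⟨k - 1, by omega⟩
  set K := k' + 1 with hK
  -- E = h ^ (h^(1/3))
  set E : ℝ := (h : ℝ) ^ ((h : ℝ) ^ ((1 : ℝ) / 3)) with hE
  have hEge : (2 : ℝ) ≤ E := by
    calc (2:ℝ) ≤ (h:ℝ) := H2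
    _ = (h:ℝ) ^ (1:ℝ) := (Real.rpow_one _).symm
    _ ≤ E := Real.rpow_le_rpow_of_exponent_le H1 hcube
  have hEpos : (0 : ℝ) < E := by linarith
  -- h^2 * E ≤ h^K
  have hkey : (h : ℝ) ^ 2 * E ≤ (h : ℝ) ^ K := by
    have : (h : ℝ) ^ 2 * E = (h : ℝ) ^ ((2 : ℝ) + (h : ℝ) ^ ((1 : ℝ) / 3)) := by
      rw [Real.rpow_add Hpos, Real.rpow_two]
    rw [this, ← Real.rpow_natCast (h:ℝ) K]
    exact Real.rpow_le_rpow_of_exponent_le H1 (by linarith)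
  -- positivity of powers
  have hpK : (0 : ℝ) < (h : ℝ) ^ K := by positivity
  have hpHK : (0:ℝ) < (h : ℝ) ^ (h * K) := by positivity
  -- q = h^2 / h^K
  set q : ℝ := (h : ℝ) ^ 2 / (h : ℝ) ^ K with hq
  have hq0 : 0 < q := by positivity
  have hqE : q ≤ 1 / E := by
    rw [div_le_div_iff₀ hpK hEpos]
    linarith [hkey]
  have hEhalf : 1 / E ≤ 1 / 2 := by
    apply div_le_div_of_nonneg_left (by norm_num) (by norm_num) hEge
  have hqhalf : q ≤ 1 / 2 := le_trans hqE hEhalf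
  -- Bernoulli: (h^K - h)^h ≥ h^(hK) (1 - q)
  have hhK : (h:ℝ) ≤ (h:ℝ) ^ K := by
    calc (h:ℝ) = (h:ℝ)^1 := (pow_one _).symm
    _ ≤ (h:ℝ)^K := pow_le_pow_right₀ H1 (by omega)
  have hu : (h : ℝ) ^ K - h = (h:ℝ)^K * (1 - (h:ℝ)/(h:ℝ)^K) := by
    field_simp
  have huq : (h:ℝ) * ((h:ℝ)/(h:ℝ)^K) = q := by
    rw [hq]; field_simp
  have hule : (h:ℝ)/(h:ℝ)^K ≤ 1 := by
    rw [div_le_one hpK]; exact hhK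
  have hupos : 0 ≤ (h:ℝ)/(h:ℝ)^K := by positivity
  have hbern : 1 - q ≤ (1 - (h:ℝ)/(h:ℝ)^K) ^ h := by
    have := one_add_mul_le_pow (a := -((h:ℝ)/(h:ℝ)^K)) (by linarith) h
    rw [mul_neg] at this
    calc 1 - q = 1 + -((h:ℝ) * ((h:ℝ)/(h:ℝ)^K)) := by rw [huq]; ring
    _ = 1 + (h:ℕ) • -((h:ℝ)/(h:ℝ)^K) := by push_cast [nsmul_eq_mul]; ring
    _ ≤ (1 + -((h:ℝ)/(h:ℝ)^K)) ^ h := by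
        have := one_add_mul_le_pow (a := -((h:ℝ)/(h:ℝ)^K)) (by linarith) h
        simpa [nsmul_eq_mul] using this
    _ = (1 - (h:ℝ)/(h:ℝ)^K) ^ h := by ring_nf
  have hAh : (h:ℝ)^(h*K) * (1 - q) ≤ ((h:ℝ)^K - h)^h := by
    rw [hu, mul_pow, ← pow_mul, mul_comm K h]
    exact mul_le_mul_of_nonneg_left hbern (le_of_lt hpHK)
  -- key: h^(hK) ≤ (1 + 4/E) * ((h^K) - h)^h
  have hkey2 : (h:ℝ)^(h*K) ≤ (1 + 4/E) * ((h:ℝ)^K - h)^h := by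
    have hε0 : (0:ℝ) < 1/E := by positivity
    have h1 : (1:ℝ) ≤ (1 - q) * (1 + 4/E) := by
      have hint : (1/E) * q ≤ (1/E) * (1/2) :=
        mul_le_mul_of_nonneg_left hqhalf (le_of_lt hε0)
      have e4 : 4/E = 4 * (1/E) := by ring
      nlinarith [hqE, hint, hε0]
    calc (h:ℝ)^(h*K) = (h:ℝ)^(h*K) * 1 := by ring
    _ ≤ (h:ℝ)^(h*K) * ((1 - q) * (1 + 4/E)) := by
        exact mul_le_mul_of_nonneg_left h1 (le_of_lt hpHK)
    _ = ((h:ℝ)^(h*K) * (1 - q)) * (1 + 4/E) := by ring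
    _ ≤ ((h:ℝ)^K - h)^h * (1 + 4/E) := by
        apply mul_le_mul_of_nonneg_right hAh
        have : 0 < 4/E := by positivity
        linarith
    _ = (1 + 4/E) * ((h:ℝ)^K - h)^h := by ring
  -- gval bound
  have hDpos : (0:ℝ) < (h:ℝ)^h - h := by
    have : (h:ℝ)^1 < (h:ℝ)^h := pow_lt_pow_right₀ (by linarith) (by omega)
    simpa using this
  have hgb : ((h:ℝ)^h - h) * (gval h (h ^ K) : ℝ) ≤ (h:ℝ)^(h*K) := by
    have := gval_id h hh k'
    nlinarith [pow_pos Hpos (k' + 1)]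
  -- choose bound
  have hchb : ((h:ℝ)^K - h)^h ≤ (Nat.factorial h : ℝ) * ((h ^ K).choose h : ℝ) := by
    have hnat : (h ^ K - h) ^ h ≤ Nat.factorial h * (h ^ K).choose h := by
      calc (h ^ K - h) ^ h ≤ (h ^ K + 1 - h) ^ h :=
            Nat.pow_le_pow_left (by omega) h
      _ ≤ (h ^ K).descFactorial h := Nat.pow_sub_le_descFactorial _ _
      _ = Nat.factorial h * (h ^ K).choose h := Nat.descFactorial_eq_factorial_mul_choose _ _
    have hcast : ((h:ℝ)^K - h) = ((h ^ K - h : ℕ) : ℝ) := by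
      have : h ≤ h ^ K := Nat.le_self_pow (by omega) h
      push_cast [this]
      ring
    rw [hcast]
    exact_mod_cast hnat
  have hchpos : (0:ℝ) < ((h ^ K).choose h : ℝ) := by
    have : 0 < (h ^ K).choose h := Nat.choose_pos (Nat.le_self_pow (by omega) h)
    exact_mod_cast this
  have hApos : (0:ℝ) < (h:ℝ)^K - h := by
    have : (h:ℝ)^1 < (h:ℝ)^K := pow_lt_pow_right₀ (by linarith) (by omega)
    simpa using this
  have hfpos : (0:ℝ) < (Nat.factorial h : ℝ) := by
    exact_mod_cast Nat.factorial_pos h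
  have hEq : (0:ℝ) < 1 + 4/E := by positivity
  -- conclude
  rw [div_le_iff₀ hchpos]
  have hchain : ((h:ℝ)^h - h) * (gval h (h ^ K) : ℝ) ≤
      (Nat.factorial h : ℝ) * (1 + 4/E) * ((h ^ K).choose h : ℝ) := by
    calc ((h:ℝ)^h - h) * (gval h (h ^ K) : ℝ) ≤ (h:ℝ)^(h*K) := hgb
    _ ≤ (1 + 4/E) * ((h:ℝ)^K - h)^h := hkey2
    _ ≤ (1 + 4/E) * ((Nat.factorial h : ℝ) * ((h ^ K).choose h : ℝ)) :=
        mul_le_mul_of_nonneg_left hchb (le_of_lt hEq)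
    _ = (Nat.factorial h : ℝ) * (1 + 4/E) * ((h ^ K).choose h : ℝ) := by ring
  calc (gval h (h ^ K) : ℝ)
      = (((h:ℝ)^h - h) * (gval h (h ^ K) : ℝ)) / ((h:ℝ)^h - h) :=
        (mul_div_cancel_left₀ _ (ne_of_gt hDpos)).symm
    _ ≤ ((Nat.factorial h : ℝ) * (1 + 4/E) * ((h ^ K).choose h : ℝ)) / ((h:ℝ)^h - h) :=
        (div_le_div_iff_of_pos_right hDpos).mpr hchain
    _ = (Nat.factorial h : ℝ) / ((h:ℝ)^h - h) * (1 + 4/E) * ((h ^ K).choose h : ℝ) := by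
        ring
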